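/- arXiv:0912.5279 — 4 statements merged into one kernel-verified Lean document; each statement's English description precedes it below -/
import Mathlib

section
/- If p ≡ 3 (mod 4) is prime and m is an integer with m ≢ 0 (mod p), then the elliptic curve E: y² = x³ - mx over F_p has exactly p + 1 points (including the point at infinity). -/
/-- The elliptic curve `y² = x³ - m·x` over `ZMod p`. -/
def Emx (p : ℕ) (m : ℤ) : WeierstrassCurve.Affine (ZMod p) :=
  { a₁ := 0, a₂ := 0, a₃ := 0, a₄ := -(m : ZMod p), a₆ := 0 }

/-- If `p ≡ 3 (mod 4)` is prime and `m ≢ 0 (mod p)`, then the curve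
`y² = x³ - m·x` over `F_p` has exactly `p + 1` points (including `∞`). -/
theorem stmt_0 (p : ℕ) [Fact p.Prime] (hp4 : p % 4 = 3)
    (m : ℤ) (hm : (m : ZMod p) ≠ 0) :
    Nat.card (Emx p m).Point = p + 1 := by
  classical
  have hp := Fact.out (p := p.Prime)
  have hp2 : p ≠ 2 := by omega
  have hchar : ringChar (ZMod p) ≠ 2 := by
    rw [ZMod.ringChar_zmod_n]; exact hp2
  have h2 : (2 : ZMod p) ≠ 0 := by
    have : ((2 : ℕ) : ZMod p) ≠ 0 := by
      rw [Ne, ZMod.natCast_eq_zero_iff]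
      exact fun h => hp2 ((Nat.prime_dvd_prime_iff_eq hp Nat.prime_two).mp h)
    simpa using this
  set W := Emx p m with hW
  have hΔ : W.Δ ≠ 0 := by
    have : W.Δ = 2 ^ 6 * (m : ZMod p) ^ 3 := by
      simp only [WeierstrassCurve.Δ, WeierstrassCurve.b₂, WeierstrassCurve.b₄,
        WeierstrassCurve.b₆, WeierstrassCurve.b₈, hW, Emx]
      ring
    rw [this]
    exact mul_ne_zero (pow_ne_zero _ h2) (pow_ne_zero _ hm)
  have hns : ∀ x y : ZMod p, W.Equation x y → W.Nonsingular x y := fun x y h =>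
    (WeierstrassCurve.Affine.equation_iff_nonsingular_of_Δ_ne_zero (W := W) hΔ).mp h
  let e : W.Point ≃ Option {xy : ZMod p × ZMod p // W.Equation xy.1 xy.2} :=
    { toFun := fun P => match P with
        | .zero => none
        | @WeierstrassCurve.Affine.Point.some _ _ _ x y h => some ⟨(x, y), h.1⟩
      invFun := fun o => match o with
        | none => .zero
        | some ⟨(x, y), h⟩ => .some x y (hns x y h)
      left_inv := by rintro (_ | _) <;> rfl
      right_inv := by rintro (_ | ⟨⟨x, y⟩, h⟩) <;> rfl }
  have heq : ∀ x y : ZMod p, W.Equation x y ↔ y ^ 2 = x ^ 3 - (m : ZMod p) * x := by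
    intro x y
    rw [WeierstrassCurve.Affine.equation_iff]
    simp only [hW, Emx]
    constructor <;> intro h <;> linear_combination h
  -- one fiber count
  have hc : ∀ a : ZMod p, (Fintype.card {y : ZMod p // y ^ 2 = a} : ℤ) =
      quadraticChar (ZMod p) a + 1 := by
    intro a
    have h := quadraticChar_card_sqrts hchar a
    rw [Set.toFinset_card] at h
    rw [← h]
    norm_cast
  -- the character sum vanishes
  have hS : ∑ x : ZMod p, quadraticChar (ZMod p) (x ^ 3 - (m : ZMod p) * x) = 0 := by
    set S := ∑ x : ZMod p, quadraticChar (ZMod p) (x ^ 3 - (m : ZMod p) * x) with hSdef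
    have hne : ¬IsSquare (-1 : ZMod p) := by
      rw [ZMod.exists_sq_eq_neg_one_iff]; simp [hp4]
    have hχ : quadraticChar (ZMod p) (-1) = -1 :=
      quadraticChar_neg_one_iff_not_isSquare.mpr hne
    have h2 : ∀ x : ZMod p, quadraticChar (ZMod p) ((-x) ^ 3 - (m : ZMod p) * (-x)) =
        -quadraticChar (ZMod p) (x ^ 3 - (m : ZMod p) * x) := by
      intro x
      have : (-x) ^ 3 - (m : ZMod p) * (-x) = -1 * (x ^ 3 - (m : ZMod p) * x) := by ring
      rw [this, map_mul, hχ, neg_one_mul]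
    have key : S = -S :=
      calc S = ∑ x : ZMod p,
            quadraticChar (ZMod p) ((-x) ^ 3 - (m : ZMod p) * (-x)) :=
          Fintype.sum_equiv (Equiv.neg (ZMod p)) _ _ (fun x => by simp)
        _ = ∑ x : ZMod p, -quadraticChar (ZMod p) (x ^ 3 - (m : ZMod p) * x) :=
          Finset.sum_congr rfl fun x _ => h2 x
        _ = -S := Finset.sum_neg_distrib _
    omega
  -- count affine points
  have hcard : Nat.card {xy : ZMod p × ZMod p // W.Equation xy.1 xy.2} = p := by
    rw [Nat.card_eq_fintype_card]
    have e2 : {xy : ZMod p × ZMod p // W.Equation xy.1 xy.2} ≃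
        Σ x : ZMod p, {y : ZMod p // y ^ 2 = x ^ 3 - (m : ZMod p) * x} :=
      (Equiv.subtypeProdEquivSigmaSubtype fun x y => W.Equation x y).trans
        (Equiv.sigmaCongrRight fun x => Equiv.subtypeEquivRight fun y => heq x y)
    rw [Fintype.card_congr e2, Fintype.card_sigma]
    have : (∑ x : ZMod p,
        (Fintype.card {y : ZMod p // y ^ 2 = x ^ 3 - (m : ZMod p) * x} : ℤ)) = p := by
      rw [Finset.sum_congr rfl fun x _ => hc _]
      rw [Finset.sum_add_distrib, hS, zero_add]
      simp [ZMod.card]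
    exact_mod_cast (by push_cast at this ⊢; exact this : ((∑ x : ZMod p,
      Fintype.card {y : ZMod p // y ^ 2 = x ^ 3 - (m : ZMod p) * x} : ℕ) : ℤ) = p)
  rw [Nat.card_congr e, Nat.card_eq_fintype_card, Fintype.card_option,
    ← Nat.card_eq_fintype_card, hcard]
end

section
/- Let p ≡ 3 (mod 4) be prime with p + 1 = 2^k·n, k ≥ 2, n odd, m a quadratic non-residue mod p, and E: y² = x³ - mx. If Q = (x, y) ∈ E(F_p) has x a quadratic non-residue mod p, then the order of Q in E(F_p) is divisible by 2^k. -/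
section Grp
variable {G : Type*} [CommGroup G] [Finite G]

/-- Kernel of the `2^j`-power map has at most `2^j` elements when the 2-torsion
has at most 2 elements. -/
lemma ker_pow_card_le (T : G) (h2 : ∀ g : G, g ^ 2 = 1 → g = 1 ∨ g = T) (j : ℕ) :
    Nat.card ((powMonoidHom (2 ^ j) : G →* G).ker) ≤ 2 ^ j := by
  induction j with
  | zero =>
    have : (powMonoidHom (2 ^ 0) : G →* G).ker = ⊥ := by
      ext g
      simp [powMonoidHom, MonoidHom.mem_ker]
    simp [this]
  | succ j ih =>
    set K := (powMonoidHom (2 ^ (j+1)) : G →* G).ker with hK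
    let f : K →* G := (powMonoidHom 2).comp K.subtype
    have hcard : Nat.card K = Nat.card (K ⧸ f.ker) * Nat.card f.ker :=
      Subgroup.card_eq_card_quotient_mul_card_subgroup f.ker
    have hq : Nat.card (K ⧸ f.ker) = Nat.card f.range :=
      Nat.card_congr (QuotientGroup.quotientKerEquivRange f).toEquiv
    have hrange : f.range ≤ (powMonoidHom (2 ^ j) : G →* G).ker := by
      rintro g ⟨⟨a, ha⟩, rfl⟩
      have : a ^ (2 ^ (j+1)) = 1 := ha
      simp only [MonoidHom.mem_ker, powMonoidHom_apply, f, MonoidHom.comp_apply,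
        Subgroup.coe_subtype]
      rw [← pow_mul]
      rw [show 2 * 2 ^ j = 2 ^ (j+1) by ring]
      exact this
    have hrle : Nat.card f.range ≤ 2 ^ j :=
      le_trans (Subgroup.card_le_of_le hrange) ih
    have hkerle : Nat.card f.ker ≤ 2 := by
      have hmem : ∀ g : f.ker, ((g : K) : G) ∈ ({1, T} : Set G) := by
        rintro ⟨g, hg⟩
        have h1 : (g : G) ^ 2 = 1 := by
          simpa [f, MonoidHom.mem_ker, powMonoidHom] using hg
        rcases h2 _ h1 with h | h <;> simp [h]
      have hinj : Function.Injective (fun g : f.ker => (⟨((g : K) : G), hmem g⟩ : ({1, T} : Set G))) := by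
        intro a b hab
        simp only [Subtype.mk.injEq] at hab
        exact Subtype.ext (Subtype.ext hab)
      calc Nat.card f.ker ≤ Nat.card ({1, T} : Set G) := Nat.card_le_card_of_injective _ hinj
        _ = ({1, T} : Set G).ncard := Nat.card_coe_set_eq _
        _ ≤ 2 := le_trans (Set.ncard_insert_le _ _) (by simp)
    calc Nat.card K = Nat.card (K ⧸ f.ker) * Nat.card f.ker := hcard
      _ = Nat.card f.range * Nat.card f.ker := by rw [hq]
      _ ≤ 2 ^ j * 2 := Nat.mul_le_mul hrle hkerle
      _ = 2 ^ (j+1) := by ring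

/-- In a finite comm group with cyclic-type 2-torsion (at most 2 square roots of 1),
a non-square element has order divisible by the full power `2^k` dividing the card. -/
lemma two_pow_dvd_orderOf_of_not_sq {G : Type*} [CommGroup G] [Finite G]
    (k : ℕ) (hdvd : 2 ^ k ∣ Nat.card G)
    (T : G) (h2 : ∀ g : G, g ^ 2 = 1 → g = 1 ∨ g = T)
    (Q : G) (hQ : ∀ R : G, R ^ 2 ≠ Q) : 2 ^ k ∣ orderOf Q := by
  rcases Nat.eq_zero_or_pos k with rfl | hk1
  · simp
  by_contra hcon
  -- there is an element g of order 2^k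
  obtain ⟨S, hS⟩ := Sylow.exists_subgroup_card_pow_prime 2 hdvd
  have hgex : ∃ g ∈ S, g ^ (2 ^ (k - 1)) ≠ 1 := by
    by_contra hall
    push_neg at hall
    have hle : S ≤ (powMonoidHom (2 ^ (k - 1)) : G →* G).ker := fun g hg => hall g hg
    have := le_trans (Subgroup.card_le_of_le hle) (ker_pow_card_le T h2 (k - 1))
    rw [hS] at this
    have h2k : 2 ^ (k - 1) < 2 ^ k := Nat.pow_lt_pow_right one_lt_two (Nat.sub_lt hk1 one_pos)
    omega
  obtain ⟨g, hgS, hg⟩ := hgex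
  have hgord : orderOf g = 2 ^ k := by
    have hdvd' : orderOf g ∣ 2 ^ k := hS ▸ Subgroup.orderOf_dvd_natCard S hgS
    obtain ⟨i, hik, hi⟩ := (Nat.dvd_prime_pow Nat.prime_two).mp hdvd'
    rcases lt_or_eq_of_le hik with hlt | rfl
    · exfalso
      apply hg
      have : orderOf g ∣ 2 ^ (k - 1) := hi ▸ pow_dvd_pow 2 (by omega)
      exact orderOf_dvd_iff_pow_eq_one.mp this
    · exact hi
  -- decompose orderOf Q
  have hQpos : 0 < orderOf Q := orderOf_pos Q
  set d := orderOf Q with hd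
  set j := d.factorization 2 with hj
  set s := d / 2 ^ j with hs
  have hds : d = 2 ^ j * s := (Nat.ordProj_mul_ordCompl_eq_self d 2).symm
  have hsodd : ¬ 2 ∣ s := Nat.not_dvd_ordCompl Nat.prime_two hQpos.ne'
  have hjk : j < k := by
    by_contra hjge
    exact hcon (dvd_trans (pow_dvd_pow 2 (by omega)) (Nat.ordProj_dvd d 2))
  -- Q' = Q ^ s has order 2 ^ j
  have hspos : 0 < s := Nat.pos_of_ne_zero (fun h0 => by rw [h0, mul_zero] at hds; omega)
  have hQ'ord : orderOf (Q ^ s) = 2 ^ j := by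
    rw [orderOf_pow' Q hspos.ne', ← hd, Nat.gcd_eq_right ⟨2 ^ j, by linarith [hds]⟩, hds,
      Nat.mul_div_cancel _ hspos]
  -- Q' lies in zpowers g
  have hKg : Subgroup.zpowers g = (powMonoidHom (2 ^ k) : G →* G).ker := by
    have hsub : (Subgroup.zpowers g : Set G) ⊆ ((powMonoidHom (2 ^ k) : G →* G).ker : Set G) := by
      rintro x ⟨c, rfl⟩
      show g ^ c ∈ (powMonoidHom (2 ^ k) : G →* G).ker
      simp only [MonoidHom.mem_ker, powMonoidHom_apply]
      rw [← zpow_natCast, ← zpow_mul, mul_comm, zpow_mul, zpow_natCast,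
        ← hgord, pow_orderOf_eq_one, one_zpow]
    have hcards : (((powMonoidHom (2 ^ k) : G →* G).ker : Set G)).ncard ≤
        ((Subgroup.zpowers g : Set G)).ncard := by
      rw [← Nat.card_coe_set_eq, ← Nat.card_coe_set_eq]
      calc Nat.card ((powMonoidHom (2 ^ k) : G →* G).ker) ≤ 2 ^ k := ker_pow_card_le T h2 k
        _ = Nat.card (Subgroup.zpowers g) := by rw [Nat.card_zpowers, hgord]
    exact SetLike.coe_injective (Set.eq_of_subset_of_ncard_le hsub hcards (Set.toFinite _))
  have hQ'mem : Q ^ s ∈ Subgroup.zpowers g := by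
    rw [hKg]
    simp only [MonoidHom.mem_ker, powMonoidHom_apply]
    exact orderOf_dvd_iff_pow_eq_one.mp (hQ'ord ▸ pow_dvd_pow 2 hjk.le)
  -- write Q ^ s = g ^ c with c a natural number < 2 ^ k
  obtain ⟨c, hc⟩ := Subgroup.mem_zpowers_iff.mp hQ'mem
  have hgpos : 0 < orderOf g := orderOf_pos g
  obtain ⟨c', hcc'⟩ : ∃ c' : ℕ, g ^ c' = Q ^ s :=
    ⟨(c % (orderOf g : ℤ)).toNat, by
      rw [← zpow_natCast, Int.toNat_of_nonneg (Int.emod_nonneg c (by exact_mod_cast hgpos.ne')),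
        zpow_mod_orderOf, hc]⟩
  -- c' must be even
  have hc'even : 2 ∣ c' := by
    by_contra hodd
    have hcop : (orderOf g).Coprime c' := by
      rw [hgord]
      exact Nat.Coprime.pow_left _ (Nat.coprime_two_left.mpr (Nat.odd_iff.mpr
        (Nat.two_dvd_ne_zero.mp hodd)))
    have heq : orderOf (g ^ c') = orderOf g := hcop.orderOf_pow
    rw [hcc', hQ'ord, hgord] at heq
    exact absurd heq (by
      have : (2:ℕ) ^ j < 2 ^ k := Nat.pow_lt_pow_right one_lt_two hjk
      omega)
  obtain ⟨e, rfl⟩ := hc'even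
  -- now express Q as a square
  obtain ⟨t, ht⟩ : ∃ t, s = 2 * t + 1 := ⟨s / 2, by omega⟩
  apply hQ (g ^ e * (Q ^ t)⁻¹)
  have h1 : (g ^ e) ^ 2 = Q ^ s := by rw [← pow_mul, mul_comm e 2, hcc']
  calc (g ^ e * (Q ^ t)⁻¹) ^ 2 = (g ^ e) ^ 2 * ((Q ^ t) ^ 2)⁻¹ := by
        rw [mul_pow, inv_pow]
    _ = Q ^ s * (Q ^ (2 * t))⁻¹ := by rw [h1, ← pow_mul, mul_comm t 2]
    _ = Q := by rw [ht, pow_add, pow_one, mul_comm (Q ^ (2*t)) Q, mul_assoc, mul_inv_cancel, mul_one]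

namespace EmxAux

open WeierstrassCurve.Affine

variable {p : ℕ} [Fact p.Prime] {m : ℤ}

lemma emx_equation_iff (x y : ZMod p) :
    (Emx p m).Equation x y ↔ y ^ 2 = x ^ 3 - (m : ZMod p) * x := by
  rw [WeierstrassCurve.Affine.equation_iff]
  simp [Emx]
  constructor <;> intro h <;> linear_combination h

lemma emx_negY (x y : ZMod p) : (Emx p m).negY x y = -y := by
  simp [WeierstrassCurve.Affine.negY, Emx]

lemma emx_nonsingular_iff (hp2 : p ≠ 2) (hm0 : (m : ZMod p) ≠ 0) (x y : ZMod p) :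
    (Emx p m).Nonsingular x y ↔ y ^ 2 = x ^ 3 - (m : ZMod p) * x := by
  rw [WeierstrassCurve.Affine.nonsingular_iff, emx_equation_iff]
  refine ⟨fun h => h.1, fun h => ⟨h, ?_⟩⟩
  by_contra hcon
  push_neg at hcon
  obtain ⟨h1, h2⟩ := hcon
  simp only [Emx] at h1 h2
  -- h1 : 0 * y = 3x² + 0 + (-m), h2 : y = -y - 0x - 0
  have h2ne : (2 : ZMod p) ≠ 0 := by
    intro hc
    have hdvd : p ∣ 2 := by
      rw [← ZMod.natCast_eq_zero_iff]
      exact_mod_cast hc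
    exact hp2 ((Nat.prime_dvd_prime_iff_eq Fact.out Nat.prime_two).mp hdvd)
  have hy : y = 0 := by
    have h2' : (2 : ZMod p) * y = 0 := by linear_combination h2
    rcases mul_eq_zero.mp h2' with hc | hc
    · exact absurd hc h2ne
    · exact hc
  have h3m : (3 : ZMod p) * x ^ 2 = (m : ZMod p) := by linear_combination -h1
  have hx0 : x = 0 := by
    have heq' : x ^ 3 - (m : ZMod p) * x = 0 := by rw [← h, hy]; ring
    have hx3 : (2 : ZMod p) * x ^ 3 = 0 := by linear_combination (-1 : ZMod p) * heq' + x * h3m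
    rcases mul_eq_zero.mp hx3 with hc | hc
    · exact absurd hc h2ne
    · exact pow_eq_zero_iff (by norm_num) |>.mp hc
  rw [hx0] at h3m
  simp at h3m
  exact hm0 h3m.symm
end EmxAux

namespace Test
variable {p : ℕ} [Fact p.Prime] {m : ℤ}
open WeierstrassCurve.Affine EmxAux

lemma emx_double_x_isSquare (hp2 : p ≠ 2) (R : (Emx p m).Point) {x y : ZMod p}
    (h : (Emx p m).Nonsingular x y) (heq : R + R = WeierstrassCurve.Affine.Point.some x y h) :
    IsSquare x := by
  have h2ne : (2 : ZMod p) ≠ 0 := by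
    intro hc
    have hdvd : p ∣ 2 := by
      rw [← ZMod.natCast_eq_zero_iff]
      exact_mod_cast hc
    exact hp2 ((Nat.prime_dvd_prime_iff_eq Fact.out Nat.prime_two).mp hdvd)
  induction R with
  | zero =>
    rw [show ((WeierstrassCurve.Affine.Point.zero : (Emx p m).Point)) = 0 from rfl,
      add_zero] at heq
    exact absurd heq.symm (WeierstrassCurve.Affine.Point.some_ne_zero h)
  | @some x₁ y₁ h₁ =>
    by_cases hy : y₁ = (Emx p m).negY x₁ y₁
    · rw [WeierstrassCurve.Affine.Point.add_self_of_Y_eq hy] at heq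
      exact absurd heq.symm (WeierstrassCurve.Affine.Point.some_ne_zero h)
    · rw [WeierstrassCurve.Affine.Point.add_self_of_Y_ne hy] at heq
      have hy1 : y₁ ≠ 0 := by
        intro hc
        apply hy
        rw [emx_negY, hc, neg_zero]
      have h2y : (2 : ZMod p) * y₁ ≠ 0 := mul_ne_zero h2ne hy1
      have heq1 : y₁ ^ 2 = x₁ ^ 3 - (m : ZMod p) * x₁ := (emx_equation_iff x₁ y₁).mp h₁.1
      have hxeq : x = (Emx p m).addX x₁ x₁ ((Emx p m).slope x₁ x₁ y₁ y₁) := by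
        cases heq
        rfl
      rw [hxeq]
      refine ⟨(x₁ ^ 2 + (m : ZMod p)) / (2 * y₁), ?_⟩
      have hL : (Emx p m).slope x₁ x₁ y₁ y₁ = (3 * x₁ ^ 2 - (m : ZMod p)) / (2 * y₁) := by
        rw [WeierstrassCurve.Affine.slope_of_Y_ne rfl hy, emx_negY]
        rw [show y₁ - -y₁ = 2 * y₁ from by ring]
        congr 1
        simp only [Emx]
        ring
      rw [hL]
      simp only [Emx, WeierstrassCurve.Affine.addX]
      field_simp
      linear_combination (-8 * x₁) * heq1
end Test

namespace Test2
variable {p : ℕ} [Fact p.Prime] {m : ℤ}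
open WeierstrassCurve.Affine EmxAux

lemma emx_two_torsion (hp2 : p ≠ 2) (hm0 : (m : ZMod p) ≠ 0) (hm : ¬ IsSquare (m : ZMod p))
    (hT : (Emx p m).Nonsingular 0 0) (P : (Emx p m).Point) (hP : P + P = 0) :
    P = 0 ∨ P = WeierstrassCurve.Affine.Point.some 0 0 hT := by
  have h2ne : (2 : ZMod p) ≠ 0 := by
    intro hc
    have hdvd : p ∣ 2 := by
      rw [← ZMod.natCast_eq_zero_iff]
      exact_mod_cast hc
    exact hp2 ((Nat.prime_dvd_prime_iff_eq Fact.out Nat.prime_two).mp hdvd)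
  induction P with
  | zero => left; rfl
  | @some x₁ y₁ h₁ =>
    right
    by_cases hy : y₁ = (Emx p m).negY x₁ y₁
    · rw [emx_negY] at hy
      have hy0 : y₁ = 0 := by
        rcases mul_eq_zero.mp (show (2 : ZMod p) * y₁ = 0 by linear_combination hy) with hc | hc
        · exact absurd hc h2ne
        · exact hc
      have heq1 : y₁ ^ 2 = x₁ ^ 3 - (m : ZMod p) * x₁ := (emx_equation_iff x₁ y₁).mp h₁.1
      rw [hy0] at heq1
      have hx0 : x₁ = 0 := by
        rcases mul_eq_zero.mp (show x₁ * (x₁ ^ 2 - (m : ZMod p)) = 0 by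
          linear_combination -heq1) with hc | hc
        · exact hc
        · exact absurd ⟨x₁, by linear_combination -hc⟩ hm
      subst hx0; subst hy0
      rfl
    · rw [WeierstrassCurve.Affine.Point.add_self_of_Y_ne hy] at hP
      exact absurd hP (WeierstrassCurve.Affine.Point.some_ne_zero _)

end Test2

namespace Test3
open WeierstrassCurve.Affine EmxAux Finset

def pointEquiv {F : Type*} [Field F] (W : WeierstrassCurve.Affine F) :
    W.Point ≃ Option {xy : F × F // W.Nonsingular xy.1 xy.2} where
  toFun P := match P with
    | .zero => none
    | @WeierstrassCurve.Affine.Point.some _ _ _ x y h => Option.some ⟨(x, y), h⟩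
  invFun o := match o with
    | none => .zero
    | Option.some ⟨(x, y), h⟩ => .some x y h
  left_inv P := by cases P <;> rfl
  right_inv o := by rcases o with _ | ⟨⟨x, y⟩, h⟩ <;> rfl

variable {p : ℕ} [Fact p.Prime] {m : ℤ}

lemma emx_card (hp4 : p % 4 = 3) (hm0 : (m : ZMod p) ≠ 0) :
    Nat.card (Emx p m).Point = p + 1 := by
  have hp2 : p ≠ 2 := by omega
  have hchar : ringChar (ZMod p) ≠ 2 := by
    rw [ZMod.ringChar_zmod_n]; exact hp2
  set F := ZMod p
  set f : F → F := fun x => x ^ 3 - (m : F) * x with hf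
  -- the quadratic character sums to zero over values of f
  have hχm1 : quadraticChar F (-1) = -1 :=
    quadraticChar_neg_one_iff_not_isSquare.mpr
      (by rw [ZMod.exists_sq_eq_neg_one_iff]; simp [hp4])
  have hneg : ∀ x : F, quadraticChar F (f (-x)) = - quadraticChar F (f x) := by
    intro x
    have hfx : f (-x) = -1 * f x := by simp only [hf]; ring
    rw [hfx, map_mul, hχm1, neg_one_mul]
  have hsum : ∑ x : F, (quadraticChar F (f x) : ℤ) = 0 := by
    have h2 : ∑ x : F, (quadraticChar F (f x) : ℤ) = ∑ x : F, (quadraticChar F (f (-x)) : ℤ) :=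
      Fintype.sum_equiv (Equiv.neg F) _ _ (fun x => by simp)
    have h3 : ∑ x : F, (quadraticChar F (f (-x)) : ℤ) = - ∑ x : F, (quadraticChar F (f x) : ℤ) := by
      rw [← Finset.sum_neg_distrib]
      exact Finset.sum_congr rfl fun x _ => by rw [hneg x]
    omega
  -- number of affine points
  have hcard2 : Nat.card {xy : F × F // xy.2 ^ 2 = f xy.1} = p := by
    rw [Nat.card_eq_fintype_card, Fintype.card_subtype]
    have hfib := Finset.card_eq_sum_card_fiberwise
      (s := univ.filter fun xy : F × F => xy.2 ^ 2 = f xy.1) (t := univ)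
      (f := fun xy : F × F => xy.1) (fun x _ => Finset.mem_univ _)
    rw [hfib]
    have hx : ∀ x : F,
        (((univ.filter fun xy : F × F => xy.2 ^ 2 = f xy.1)).filter
          fun xy => xy.1 = x).card = (univ.filter fun y : F => y ^ 2 = f x).card := by
      intro x
      apply Finset.card_bij (fun xy _ => xy.2)
      · rintro ⟨a, b⟩ hab
        simp only [Finset.mem_filter, Finset.mem_univ, true_and] at hab ⊢
        rw [← hab.2]; exact hab.1
      · rintro ⟨a, b⟩ hab ⟨c, d⟩ hcd hbd
        simp only [Finset.mem_filter, Finset.mem_univ, true_and] at hab hcd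
        simp only at hbd
        exact Prod.ext (hab.2.trans hcd.2.symm) hbd
      · intro y hy
        simp only [Finset.mem_filter, Finset.mem_univ, true_and] at hy
        exact ⟨(x, y), by simp [hy], rfl⟩
    rw [Finset.sum_congr rfl fun x _ => hx x]
    have key : ∀ x : F, ((univ.filter fun y : F => y ^ 2 = f x).card : ℤ) =
        quadraticChar F (f x) + 1 := by
      intro x
      have := quadraticChar_card_sqrts hchar (f x)
      rw [← this]
      norm_cast
      congr 1
      ext y
      simp
    have : (∑ x : F, ((univ.filter fun y : F => y ^ 2 = f x).card : ℤ)) = p := by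
      rw [Finset.sum_congr rfl fun x _ => key x, Finset.sum_add_distrib, hsum,
        Finset.sum_const, zero_add]
      simp [ZMod.card p]; exact ZMod.card p
    exact_mod_cast (by push_cast at this ⊢; exact this :
      ((∑ x : F, (univ.filter fun y : F => y ^ 2 = f x).card : ℕ) : ℤ) = p)
  -- assemble
  have e1 := pointEquiv (Emx p m)
  have e2 : {xy : F × F // (Emx p m).Nonsingular xy.1 xy.2} ≃
      {xy : F × F // xy.2 ^ 2 = f xy.1} :=
    Equiv.subtypeEquivRight fun xy => emx_nonsingular_iff hp2 hm0 xy.1 xy.2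
  haveI : Finite {xy : F × F // (Emx p m).Nonsingular xy.1 xy.2} := Subtype.finite
  haveI : Fintype {xy : F × F // (Emx p m).Nonsingular xy.1 xy.2} := Fintype.ofFinite _
  rw [Nat.card_congr (e1.trans (Equiv.optionCongr e2))]
  rw [Nat.card_eq_fintype_card, Fintype.card_option, ← Nat.card_eq_fintype_card, hcard2]

end Test3


open WeierstrassCurve.Affine EmxAux Test Test2 Test3 in
/-- If `p ≡ 3 (mod 4)` is prime with `p + 1 = 2^k·n`, `k ≥ 2`, `n` odd, `m` a
quadratic non-residue mod `p`, and `Q = (x, y) ∈ E(F_p)` has `x` a quadratic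
non-residue mod `p`, then the order of `Q` is divisible by `2^k`. -/
theorem stmt_4 (p : ℕ) [Fact p.Prime] (hp4 : p % 4 = 3)
    (k n : ℕ) (hk : 2 ≤ k) (hn : Odd n) (hpn : p + 1 = 2 ^ k * n)
    (m : ℤ) (hm0 : (m : ZMod p) ≠ 0) (hm : ¬ IsSquare (m : ZMod p))
    (x y : ZMod p) (h : (Emx p m).Nonsingular x y) (hx : ¬ IsSquare x) :
    2 ^ k ∣ addOrderOf (WeierstrassCurve.Affine.Point.some x y h) := by
  have hp2 : p ≠ 2 := by omega
  haveI : Finite {xy : ZMod p × ZMod p // (Emx p m).Nonsingular xy.1 xy.2} := Subtype.finite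
  haveI : Finite (Option {xy : ZMod p × ZMod p // (Emx p m).Nonsingular xy.1 xy.2}) :=
    Finite.of_equiv _ (Equiv.optionEquivSumPUnit.{0,0} _).symm
  haveI : Finite ((Emx p m).Point) := Finite.of_equiv _ (pointEquiv (Emx p m)).symm
  have hT : (Emx p m).Nonsingular 0 0 := (emx_nonsingular_iff hp2 hm0 0 0).mpr (by ring)
  set G := Multiplicative ((Emx p m).Point) with hG
  have hcardG : Nat.card G = p + 1 := by
    rw [Nat.card_congr (MulEquiv.toEquiv (MulEquiv.refl G)), hG]
    rw [Nat.card_congr Multiplicative.toAdd]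
    exact emx_card hp4 hm0
  have hdvd : 2 ^ k ∣ Nat.card G := by rw [hcardG, hpn]; exact Dvd.intro n rfl
  have h2 : ∀ g : G, g ^ 2 = 1 → g = 1 ∨
      g = Multiplicative.ofAdd (WeierstrassCurve.Affine.Point.some 0 0 hT) := by
    intro g hg
    have hadd : g.toAdd + g.toAdd = 0 := by
      have := congrArg Multiplicative.toAdd hg
      rwa [toAdd_pow, two_smul, toAdd_one] at this
    rcases emx_two_torsion hp2 hm0 hm hT g.toAdd hadd with h0 | h0
    · left; exact h0
    · right; exact h0
  have hQ : ∀ R : G, R ^ 2 ≠ Multiplicative.ofAdd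
      (WeierstrassCurve.Affine.Point.some x y h) := by
    intro R hR
    apply hx
    have hadd : R.toAdd + R.toAdd = WeierstrassCurve.Affine.Point.some x y h := by
      have := congrArg Multiplicative.toAdd hR
      rwa [toAdd_pow, two_smul] at this
    exact emx_double_x_isSquare hp2 R.toAdd h hadd
  have := two_pow_dvd_orderOf_of_not_sq k hdvd _ h2 _ hQ
  rwa [orderOf_ofAdd_eq_addOrderOf] at this
end Grp
end

section
/- Let p = 2^k·n − 1 be composite with k ≥ 2, n odd, n ≤ √p / λ for some λ > 1, and λ√p > (p^{1/4} + 1)². Then there is no elliptic curve E: y² = x³ − mx over Z/p (with gcd(m,p)=1) and point Q on E such that 2^i·Q is defined with denominator coprime to p for i = 1,...,k−1 and 2^k·Q = ∞ modulo p. Equivalently, if such a point exists, p is prime. -/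
set_option maxHeartbeats 1600000



open WeierstrassCurve

-- counting lemma
lemma my_card_curve (F : Type) [Field F] [Fintype F] [DecidableEq F] (hF : ringChar F ≠ 2)
    (hcard : Fintype.card F % 4 = 3) (a : F) :
    Fintype.card {P : F × F // P.2 ^ 2 = P.1 ^ 3 + a * P.1} = Fintype.card F := by
  classical
  have e : {P : F × F // P.2 ^ 2 = P.1 ^ 3 + a * P.1} ≃ Σ x : F, {y : F // y ^ 2 = x ^ 3 + a * x} :=
    Equiv.subtypeProdEquivSigmaSubtype fun x y => y ^ 2 = x ^ 3 + a * x
  rw [Fintype.card_congr e, Fintype.card_sigma]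
  have key : ∀ x : F, (Fintype.card {y : F // y ^ 2 = x ^ 3 + a * x} : ℤ)
      = quadraticChar F (x ^ 3 + a * x) + 1 := by
    intro x
    have := quadraticChar_card_sqrts hF (x ^ 3 + a * x)
    rw [← this]
    congr 1
    rw [Set.toFinset_card]
    rfl
  have hsum : ∑ x : F, quadraticChar F (x ^ 3 + a * x) = 0 := by
    have hneg : ∀ x : F, quadraticChar F ((-x) ^ 3 + a * (-x))
        = - quadraticChar F (x ^ 3 + a * x) := by
      intro x
      have : (-x) ^ 3 + a * (-x) = (-1) * (x ^ 3 + a * x) := by ring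
      rw [this, map_mul]
      have h1 : quadraticChar F (-1 : F) = -1 := by
        rw [quadraticChar_neg_one hF, ZMod.χ₄_nat_three_mod_four hcard]
      rw [h1]; ring
    have := Equiv.sum_comp (Equiv.neg F) (fun x => quadraticChar F (x ^ 3 + a * x))
    have h2 : ∑ x : F, quadraticChar F ((-x) ^ 3 + a * (-x))
        = ∑ x : F, quadraticChar F (x ^ 3 + a * x) := this
    simp only [hneg, Finset.sum_neg_distrib] at h2
    linarith
  have : ((∑ x : F, Fintype.card {y : F // y ^ 2 = x ^ 3 + a * x} : ℕ) : ℤ)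
      = (Fintype.card F : ℤ) := by
    push_cast
    rw [Finset.sum_congr rfl fun x _ => key x, Finset.sum_add_distrib, hsum]
    simp [Finset.card_univ]
  exact_mod_cast this
open WeierstrassCurve WeierstrassCurve.Affine

noncomputable section
variable {F : Type} [Field F]

def myW (A : F) : WeierstrassCurve.Affine F := { a₁ := 0, a₂ := 0, a₃ := 0, a₄ := A, a₆ := 0 }

lemma myW_equation {A x y : F} : (myW A).Equation x y ↔ y ^ 2 = x ^ 3 + A * x := by
  rw [WeierstrassCurve.Affine.equation_iff]
  simp only [myW]
  constructor <;> intro h <;> linear_combination h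

@[simp] lemma myW_a₁ (A : F) : (myW A).a₁ = 0 := rfl
@[simp] lemma myW_a₂ (A : F) : (myW A).a₂ = 0 := rfl
@[simp] lemma myW_a₃ (A : F) : (myW A).a₃ = 0 := rfl
@[simp] lemma myW_a₄ (A : F) : (myW A).a₄ = A := rfl
@[simp] lemma myW_a₆ (A : F) : (myW A).a₆ = 0 := rfl

lemma myW_Δ (A : F) : (myW A).Δ = -64 * A ^ 3 := by
  rw [WeierstrassCurve.Δ, b₂, b₄, b₆, b₈]
  simp only [myW_a₁, myW_a₂, myW_a₃, myW_a₄, myW_a₆]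
  ring

lemma myW_nonsingular {A x y : F} (hA : A ≠ 0) (h2 : (2 : F) ≠ 0)
    (h : y ^ 2 = x ^ 3 + A * x) : (myW A).Nonsingular x y := by
  refine (WeierstrassCurve.Affine.equation_iff_nonsingular_of_Δ_ne_zero (W := myW A) ?_).mp (myW_equation.mpr h)
  rw [myW_Δ]
  have h64 : (64 : F) ≠ 0 := by
    have : (64 : F) = 2 ^ 6 := by norm_num
    rw [this]; exact pow_ne_zero _ h2
  intro hc
  rcases mul_eq_zero.mp hc with hc | hc
  · exact h64 (by linear_combination -hc)
  · exact hA (pow_eq_zero_iff (by norm_num)|>.mp hc)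

lemma myW_negY {A x y : F} : (myW A).negY x y = -y := by simp [WeierstrassCurve.Affine.negY, myW]

lemma my_some_congr {W : WeierstrassCurve.Affine F} {x₁ x₂ y : F} (hx : x₁ = x₂)
    (h : W.Nonsingular x₁ y) : Point.some _ _ h = Point.some _ _ (hx ▸ h) := by subst hx; rfl

lemma my_double [DecidableEq F] {A x y x' : F} (h2 : (2 : F) ≠ 0) (h : (myW A).Nonsingular x y) (hy : y ≠ 0)
    (hx' : 4 * (x ^ 3 + A * x) * x' = x ^ 4 - 2 * A * x ^ 2 + A ^ 2) :
    ∃ (y' : F) (h' : (myW A).Nonsingular x' y'),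
      Point.some _ _ h + Point.some _ _ h = Point.some _ _ h' := by
  have heq : y ^ 2 = x ^ 3 + A * x := myW_equation.mp h.1
  have hne : y ≠ (myW A).negY x y := by
    rw [myW_negY]
    intro hc
    apply hy
    have : 2 * y = 0 := by linear_combination hc
    rcases mul_eq_zero.mp this with hc' | hc'
    · exact absurd hc' h2
    · exact hc'
  have hslope : (myW A).slope x x y y = (3 * x ^ 2 + A) / (2 * y) := by
    rw [WeierstrassCurve.Affine.slope_of_Y_ne rfl hne, myW_negY]
    simp only [myW]
    ring_nf
  have key : (myW A).addX x x ((myW A).slope x x y y) = x' := by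
    rw [WeierstrassCurve.Affine.addX, hslope]
    simp only [myW]
    field_simp
    ring_nf
    linear_combination (-8 * x - 4 * x') * heq - hx'
  rw [WeierstrassCurve.Affine.Point.add_self_of_Y_ne hne]
  exact ⟨_, key ▸ WeierstrassCurve.Affine.nonsingular_add h h fun hc => hne hc.2,
    my_some_congr key _⟩

lemma myW_card [Fintype F] [DecidableEq F] (hF : ringChar F ≠ 2)
    (hcard : Fintype.card F % 4 = 3) {A : F} (hA : A ≠ 0) :
    Nat.card (myW A).Point = Fintype.card F + 1 := by
  have h2 : (2 : F) ≠ 0 := Ring.two_ne_zero hF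
  have e : (myW A).Point ≃ Option {P : F × F // P.2 ^ 2 = P.1 ^ 3 + A * P.1} :=
    { toFun := fun P => match P with
        | .zero => none
        | @WeierstrassCurve.Affine.Point.some _ _ _ x y h =>
            some ⟨(x, y), myW_equation.mp h.1⟩
      invFun := fun o => match o with
        | none => .zero
        | some ⟨(x, y), h⟩ => .some _ _ (myW_nonsingular hA h2 h)
      left_inv := by rintro (_ | _) <;> rfl
      right_inv := by rintro (_ | ⟨⟨x, y⟩, h⟩) <;> rfl }
  rw [Nat.card_congr e, Finite.card_option, Nat.card_eq_fintype_card,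
    my_card_curve F hF hcard A]

lemma my_exists_prime_fac (N : ℕ) (h : N % 4 = 3) : ∃ r, r.Prime ∧ r ∣ N ∧ r % 4 = 3 := by
  induction N using Nat.strong_induction_on with
  | _ N ih =>
    have hN1 : N ≠ 1 := by omega
    have hq : N.minFac.Prime := Nat.minFac_prime hN1
    have hqd : N.minFac ∣ N := Nat.minFac_dvd N
    have hodd : N % 2 = 1 := by omega
    have hq2 : N.minFac ≠ 2 := fun h2 => absurd (h2 ▸ hqd) (by omega)
    have hqodd : N.minFac % 2 = 1 := Nat.odd_iff.mp (hq.odd_of_ne_two hq2)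
    rcases Nat.lt_or_ge (N.minFac % 4) 4 with _ | h4
    · by_cases h3 : N.minFac % 4 = 3
      · exact ⟨N.minFac, hq, hqd, h3⟩
      · have h1 : N.minFac % 4 = 1 := by omega
        obtain ⟨M, hM⟩ := hqd
        have hM4 : M % 4 = 3 := by
          have := Nat.mul_mod N.minFac M 4
          rw [← hM, h, h1] at this
          omega
        have hMlt : M < N := by
          have hM0 : 0 < M := by omega
          have : 1 * M < N.minFac * M := by
            exact (Nat.mul_lt_mul_right hM0).mpr hq.one_lt
          omega
        obtain ⟨r, hr, hrd, hr4⟩ := ih M hMlt hM4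
        exact ⟨r, hr, hrd.trans (Dvd.intro_left _ hM.symm), hr4⟩
    · omega

/-- **Primality test for `p = 2^k·n − 1` with `n` small.**
Let `p = 2^k·n − 1` with `k ≥ 2`, `n` odd, `n ≤ √p/λ` for some `λ > 1`, and
`λ√p > (p^{1/4} + 1)²`.  Suppose there are `m, x, y` with `gcd(m, p) = 1`,
`(x, y)` on `y² = x³ − m·x (mod p)`, and a sequence `xs` of `x`-coordinates of
the points `2^i·Q` (so `xs 0 = x` and the duplication formula
`x_{i+1} = (x_i⁴ + 2m x_i² + m²)/(4(x_i³ − m x_i))` holds mod `p`) such that the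
denominators `S_i = 4(x_{i−1}³ − m x_{i−1})` satisfy `gcd(S_i, p) = 1` for
`1 ≤ i ≤ k − 1` and `S_k ≡ 0 (mod p)` (i.e. `2^k·Q = ∞`).  Then `p` is prime. -/
theorem stmt_7 (k n p : ℕ) (hk : 2 ≤ k) (hn : Odd n) (hp : p = 2 ^ k * n - 1)
    (lam : ℝ) (hlam : 1 < lam)
    (hsmall : (n : ℝ) ≤ Real.sqrt p / lam)
    (hbig : lam * Real.sqrt p > ((p : ℝ) ^ ((1 : ℝ) / 4) + 1) ^ 2)
    (m : ℤ) (hm : Int.gcd m p = 1)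
    (x y : ℤ) (hQ : ((y : ZMod p)) ^ 2 = (x : ZMod p) ^ 3 - (m : ZMod p) * (x : ZMod p))
    (xs : ℕ → ℤ) (hx0 : xs 0 = x)
    (hrec : ∀ i, i + 1 ≤ k - 1 →
      ((4 * (xs i ^ 3 - m * xs i) * xs (i + 1) : ℤ) : ZMod p)
        = ((xs i ^ 4 + 2 * m * xs i ^ 2 + m ^ 2 : ℤ) : ZMod p))
    (hgcd : ∀ i, 1 ≤ i → i ≤ k - 1 →
      Int.gcd (4 * (xs (i - 1) ^ 3 - m * xs (i - 1))) p = 1)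
    (hSk : ((4 * (xs (k - 1) ^ 3 - m * xs (k - 1)) : ℤ) : ZMod p) = 0) :
    p.Prime := by
  by_contra hcomp
  -- basic numeric facts
  have hn1 : 1 ≤ n := by have := Nat.odd_iff.mp hn; omega
  have h2k4 : 4 ≤ 2 ^ k := by
    calc (4:ℕ) = 2 ^ 2 := rfl
    _ ≤ 2 ^ k := Nat.pow_le_pow_right (by norm_num) hk
  have hpow : 4 ≤ 2 ^ k * n := le_trans h2k4 (Nat.le_mul_of_pos_right _ (by omega))
  have hp1 : p + 1 = 2 ^ k * n := by omega
  have hp3 : 3 ≤ p := by omega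
  have hp4 : p % 4 = 3 := by
    obtain ⟨c, hc⟩ : (4:ℕ) ∣ 2 ^ k := by
      have : (2:ℕ) ^ 2 ∣ 2 ^ k := pow_dvd_pow 2 hk
      simpa using this
    have : 2 ^ k * n = 4 * (c * n) := by rw [hc]; ring
    omega
  -- real facts
  have hlam0 : (0:ℝ) < lam := lt_trans one_pos hlam
  have hpR : (0:ℝ) < p := by exact_mod_cast (by omega : 0 < p)
  have hsp : 0 < Real.sqrt p := Real.sqrt_pos.mpr hpR
  have hnR : (0:ℝ) < n := by exact_mod_cast hn1
  have hprod : (2:ℝ) ^ k * n = (p:ℝ) + 1 := by exact_mod_cast hp1.symm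
  have h2k : lam * Real.sqrt p < (2 ^ k : ℝ) := by
    have h5 : lam * Real.sqrt p * n ≤ Real.sqrt p * Real.sqrt p := by
      calc lam * Real.sqrt p * n ≤ lam * Real.sqrt p * (Real.sqrt p / lam) := by
            apply mul_le_mul_of_nonneg_left hsmall (by positivity)
        _ = Real.sqrt p * Real.sqrt p := by
            field_simp
    have h6 : Real.sqrt p * Real.sqrt p = p := Real.mul_self_sqrt (le_of_lt hpR)
    have h7 : lam * Real.sqrt p * n < (2:ℝ) ^ k * n := by
      rw [hprod]; rw [h6] at h5; linarith
    exact lt_of_mul_lt_mul_right h7 (le_of_lt hnR)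
  -- choose prime factor r ≡ 3 mod 4
  obtain ⟨r, hr, hrdvd, hr4⟩ := my_exists_prime_fac p hp4
  haveI : Fact r.Prime := ⟨hr⟩
  haveI : NeZero r := ⟨hr.pos.ne'⟩
  have hr2 : 2 ≤ r := hr.two_le
  have hrne2 : r ≠ 2 := by omega
  have hrchar : ringChar (ZMod r) ≠ 2 := by
    rw [ZMod.ringChar_zmod_n]; exact hrne2
  have h2 : (2 : ZMod r) ≠ 0 := Ring.two_ne_zero hrchar
  set φ := ZMod.castHom hrdvd (ZMod r) with hφ
  have hunit : ∀ S : ℤ, Int.gcd S p = 1 → ((S : ZMod r) ≠ 0) := by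
    intro S hS hc
    rw [ZMod.intCast_zmod_eq_zero_iff_dvd] at hc
    have hdp : (r:ℤ) ∣ (p:ℤ) := Int.natCast_dvd_natCast.mpr hrdvd
    have : (r:ℤ) ∣ (Int.gcd S p : ℤ) := Int.dvd_coe_gcd hc hdp
    rw [hS] at this
    have h1 : (r:ℕ) ∣ 1 := by exact_mod_cast this
    rw [Nat.dvd_one] at h1
    omega
  set M : ZMod r := ((m : ℤ) : ZMod r) with hM
  set A : ZMod r := -M with hA'
  have hA : A ≠ 0 := by
    rw [hA', neg_ne_zero]; exact hunit m hm
  -- transport equations from ZMod p to ZMod r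
  have hmap : ∀ z : ℤ, φ ((z : ZMod p)) = (z : ZMod r) := fun z => map_intCast φ z
  have hQr : ((y:ℤ) : ZMod r) ^ 2 = ((x:ℤ) : ZMod r) ^ 3 + A * ((x:ℤ) : ZMod r) := by
    have h := congrArg φ hQ
    simp only [map_pow, map_sub, map_mul, hmap] at h
    rw [hA', hM]; linear_combination h
  have h0 : (myW A).Nonsingular ((xs 0 : ℤ) : ZMod r) ((y:ℤ) : ZMod r) :=
    myW_nonsingular hA h2 (by rw [hx0]; exact hQr)
  set Q : (myW A).Point := WeierstrassCurve.Affine.Point.some _ _ h0 with hQdef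
  -- induction on doublings
  have hmain : ∀ i, i ≤ k - 1 →
      ∃ (yi : ZMod r) (h : (myW A).Nonsingular ((xs i : ℤ) : ZMod r) yi),
        (2 ^ i) • Q = WeierstrassCurve.Affine.Point.some _ _ h := by
    intro i
    induction i with
    | zero => exact fun _ => ⟨_, h0, by rw [pow_zero, one_smul]⟩
    | succ j ihj =>
      intro hle
      obtain ⟨yj, hj, hQj⟩ := ihj (by omega)
      have hgcdj : Int.gcd (4 * (xs j ^ 3 - m * xs j)) p = 1 := by
        have := hgcd (j + 1) (by omega) (by omega)
        simpa using this
      have hden : ((4 * (xs j ^ 3 - m * xs j) : ℤ) : ZMod r) ≠ 0 := hunit _ hgcdj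
      have hyj2 : yj ^ 2 = ((xs j : ℤ) : ZMod r) ^ 3 + A * ((xs j : ℤ) : ZMod r) :=
        myW_equation.mp hj.1
      have hyj : yj ≠ 0 := by
        intro hc
        apply hden
        push_cast
        rw [hA', hM] at hyj2
        rw [hc] at hyj2
        linear_combination -4 * hyj2
      have hrecr : ((4 * (xs j ^ 3 - m * xs j) * xs (j+1) : ℤ) : ZMod r)
          = ((xs j ^ 4 + 2 * m * xs j ^ 2 + m ^ 2 : ℤ) : ZMod r) := by
        have h := congrArg φ (hrec j (by omega))
        rwa [hmap, hmap] at h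
      push_cast at hrecr
      have hx' : 4 * (((xs j : ℤ) : ZMod r) ^ 3 + A * ((xs j : ℤ) : ZMod r)) * ((xs (j+1) : ℤ) : ZMod r)
          = ((xs j : ℤ) : ZMod r) ^ 4 - 2 * A * ((xs j : ℤ) : ZMod r) ^ 2 + A ^ 2 := by
        rw [hA', hM]
        linear_combination hrecr
      obtain ⟨y', h', hdd⟩ := my_double h2 hj hyj hx'
      refine ⟨y', h', ?_⟩
      rw [pow_succ', mul_smul, two_nsmul, hQj, hdd]
  obtain ⟨Y, hY, hQk1⟩ := hmain (k - 1) le_rfl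
  -- Y = 0
  have hSkr : ((4 * (xs (k-1) ^ 3 - m * xs (k-1)) : ℤ) : ZMod r) = 0 := by
    have h := congrArg φ hSk
    rwa [hmap, map_zero] at h
  have hY2 : Y ^ 2 = ((xs (k-1) : ℤ) : ZMod r) ^ 3 + A * ((xs (k-1) : ℤ) : ZMod r) :=
    myW_equation.mp hY.1
  have hY0 : Y = 0 := by
    have h4 : ((2:ZMod r) * 2) * Y ^ 2 = 0 := by
      push_cast at hSkr
      rw [hA', hM] at hY2
      linear_combination hSkr + 4 * hY2
    have : Y ^ 2 = 0 := by
      rcases mul_eq_zero.mp h4 with h | h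
      · exact absurd (mul_eq_zero.mp h) (by simp [h2])
      · exact h
    exact pow_eq_zero_iff (by norm_num) |>.mp this
  have hQzero : (2 ^ k) • Q = 0 := by
    have hkk : (2:ℕ) ^ k = 2 * 2 ^ (k - 1) := by
      rw [← pow_succ']; congr 1; omega
    rw [hkk, mul_smul, two_nsmul, hQk1]
    exact WeierstrassCurve.Affine.Point.add_self_of_Y_eq (by rw [myW_negY, hY0, neg_zero])
  have hQk1ne : (2 ^ (k-1)) • Q ≠ 0 := by
    rw [hQk1]; exact WeierstrassCurve.Affine.Point.some_ne_zero _
  have hord : addOrderOf Q = 2 ^ k := by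
    have hdvd : addOrderOf Q ∣ 2 ^ k := addOrderOf_dvd_of_nsmul_eq_zero hQzero
    obtain ⟨j, hjk, hj⟩ := (Nat.dvd_prime_pow Nat.prime_two).mp hdvd
    rcases Nat.lt_or_ge j k with hlt | hge
    · exfalso
      apply hQk1ne
      apply addOrderOf_dvd_iff_nsmul_eq_zero.mp
      rw [hj]
      exact pow_dvd_pow 2 (by omega)
    · rw [hj]; congr 1; omega
  -- Lagrange
  have hcardF : Fintype.card (ZMod r) % 4 = 3 := by rw [ZMod.card]; exact hr4
  have hcardr : Nat.card (myW A).Point = r + 1 := by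
    rw [myW_card hrchar hcardF hA, ZMod.card]
  have hdvd2 : 2 ^ k ∣ r + 1 := by
    have := addOrderOf_dvd_natCard Q
    rwa [hord, hcardr] at this
  -- final arithmetic
  have hrnep : r ≠ p := fun h => hcomp (h ▸ hr)
  have hrdvd' := hrdvd
  obtain ⟨s, hs⟩ := hrdvd'
  have hs2 : 2 ≤ s := by
    rcases Nat.lt_or_ge s 2 with hlt | hge
    · interval_cases s
      · omega
      · omega
    · exact hge
  obtain ⟨t, ht⟩ := hdvd2
  have ht1 : 1 ≤ t := by
    rcases Nat.eq_zero_or_pos t with h0' | h0'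
    · rw [h0'] at ht; omega
    · exact h0'
  have key : (2^k : ℤ) ∣ (s:ℤ) - 1 := by
    refine ⟨(t:ℤ) * s - n, ?_⟩
    have e1 : (p:ℤ) + 1 = 2^k * n := by exact_mod_cast hp1
    have e2 : (p:ℤ) = r * s := by exact_mod_cast hs
    have e3 : (r:ℤ) + 1 = 2^k * t := by exact_mod_cast ht
    linear_combination (s:ℤ) * e3 + e2 - e1
  have hsge : 2^k + 1 ≤ s := by
    have h1 : (2^k : ℤ) ≤ (s:ℤ) - 1 := Int.le_of_dvd (by exact_mod_cast (by omega : (1:ℤ) ≤ (s:ℤ) - 1)) key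
    have : (2^k : ℤ) + 1 ≤ (s:ℤ) := by omega
    exact_mod_cast this
  have ht1Z : (1:ℤ) ≤ t := by exact_mod_cast ht1
  have e1 : (p:ℤ) + 1 = 2^k * n := by exact_mod_cast hp1
  have e2 : (p:ℤ) = r * s := by exact_mod_cast hs
  have e3 : (r:ℤ) + 1 = 2^k * t := by exact_mod_cast ht
  have hsgeZ : ((2:ℤ)^k) + 1 ≤ (s:ℤ) := by exact_mod_cast hsge
  have hrgeZ : ((2:ℤ)^k) - 1 ≤ (r:ℤ) := by
    have hh : (2:ℤ)^k * 1 ≤ (2:ℤ)^k * t := by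
      apply mul_le_mul_of_nonneg_left ht1Z (by positivity)
    linarith
  have hZ1 : ((2:ℤ)^k - 1) * ((2:ℤ)^k + 1) ≤ (r:ℤ) * s :=
    mul_le_mul hrgeZ hsgeZ (by positivity) (by positivity)
  have hn2k : 2 ^ k ≤ n := by
    have expand : ((2:ℤ)^k - 1) * ((2:ℤ)^k + 1) = (2:ℤ)^k * 2^k - 1 := by ring
    have h4 : (2:ℤ)^k * 2^k ≤ (2:ℤ)^k * n := by
      rw [← e1]; linarith
    have : ((2:ℤ)^k) ≤ (n:ℤ) := le_of_mul_le_mul_left h4 (by positivity)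
    exact_mod_cast this
  -- contradiction
  have hfin : lam * Real.sqrt p < Real.sqrt p / lam := by
    calc lam * Real.sqrt p < (2^k : ℝ) := h2k
      _ ≤ (n : ℝ) := by exact_mod_cast hn2k
      _ ≤ Real.sqrt p / lam := hsmall
  rw [lt_div_iff₀ hlam0] at hfin
  nlinarith [hsp, hlam]
end
end

section
/- If p = 2^k·n − 1 is prime with k ≥ 2, n odd, and m is a quadratic non-residue mod p, then the elliptic curve E: y² = x³ − mx over F_p has a point of order exactly 2^k. -/
/-! ### Auxiliary group theory -/

open Finset in
private lemma filter_two_pow_smul_le {G : Type*} [AddCommGroup G] [Fintype G] [DecidableEq G]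
    (h2 : #(univ.filter fun x : G => 2 • x = 0) ≤ 2) (j : ℕ) :
    #(univ.filter fun x : G => 2 ^ j • x = 0) ≤ 2 ^ j := by
  induction j with
  | zero =>
      have hsub : (univ.filter fun x : G => 2 ^ 0 • x = 0) ⊆ {0} := by
        intro x hx
        simp only [mem_filter, pow_zero, one_nsmul] at hx
        simp [hx.2]
      simpa using card_le_card hsub
  | succ j ih =>
      have hmaps : ∀ x ∈ (univ.filter fun x : G => 2 ^ (j+1) • x = 0),
          (2 • x) ∈ (univ.filter fun x : G => 2 ^ j • x = 0) := by
        intro x hx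
        simp only [mem_filter, mem_univ, true_and] at hx ⊢
        rw [← mul_nsmul', ← pow_succ]
        exact hx
      have hfib : ∀ b ∈ (univ.filter fun x : G => 2 ^ j • x = 0),
          #((univ.filter fun x : G => 2 ^ (j+1) • x = 0).filter fun x => 2 • x = b) ≤ 2 := by
        intro b _
        rcases ((univ.filter fun x : G => 2 ^ (j+1) • x = 0).filter
            fun x => 2 • x = b).eq_empty_or_nonempty with h | ⟨x₀, hx₀⟩
        · simp [h]
        · have hx₀' := mem_filter.mp hx₀
          have hsub : ((univ.filter fun x : G => 2 ^ (j+1) • x = 0).filter fun x => 2 • x = b)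
              ⊆ (univ.filter fun x : G => 2 • x = 0).image (· + x₀) := by
            intro x hx
            have hx' := mem_filter.mp hx
            refine mem_image.mpr ⟨x - x₀, ?_, by abel⟩
            simp only [mem_filter, mem_univ, true_and]
            rw [smul_sub, hx'.2, hx₀'.2, sub_self]
          calc #((univ.filter fun x : G => 2 ^ (j+1) • x = 0).filter fun x => 2 • x = b)
              ≤ #((univ.filter fun x : G => 2 • x = 0).image (· + x₀)) := card_le_card hsub
            _ ≤ #(univ.filter fun x : G => 2 • x = 0) := card_image_le
            _ ≤ 2 := h2
      calc #(univ.filter fun x : G => 2 ^ (j+1) • x = 0)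
          ≤ 2 * #(univ.filter fun x : G => 2 ^ j • x = 0) :=
            card_le_mul_card_image_of_maps_to hmaps 2 hfib
        _ ≤ 2 * 2 ^ j := Nat.mul_le_mul_left 2 ih
        _ = 2 ^ (j+1) := (pow_succ' 2 j).symm

open Finset in
private lemma exists_addOrderOf_eq_two_pow {G : Type*} [AddCommGroup G] [Fintype G] [DecidableEq G]
    {k n : ℕ} (hk : 1 ≤ k) (hn : Odd n) (hcard : Fintype.card G = 2 ^ k * n)
    (hle : ∀ j, #(univ.filter fun x : G => 2 ^ j • x = 0) ≤ 2 ^ j) :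
    ∃ g : G, addOrderOf g = 2 ^ k := by
  haveI := Fact.mk Nat.prime_two
  obtain ⟨S⟩ : Nonempty (Sylow 2 (Multiplicative G)) := inferInstance
  have hn0 : n ≠ 0 := by rintro rfl; simp at hn
  have hfact : (Nat.card (Multiplicative G)).factorization 2 = k := by
    rw [Nat.card_eq_fintype_card]
    have h0 : Fintype.card (Multiplicative G) = 2 ^ k * n := by
      rw [Fintype.card_multiplicative]; exact hcard
    rw [h0, Nat.factorization_mul (by positivity) hn0]
    simp [Nat.Prime.factorization_pow, Nat.factorization_eq_zero_of_not_dvd hn.not_two_dvd_nat,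
      Nat.Prime.factorization_self Nat.prime_two]
  have hScard : Nat.card S = 2 ^ k := by rw [S.card_eq_multiplicity, hfact]
  -- every element of S gives a `2^k`-torsion element of G
  have himage : ∀ s : S, 2 ^ k • Multiplicative.toAdd ((s : Multiplicative G)) = 0 := by
    intro s
    have h1 : s ^ (2 ^ k) = 1 := by rw [← hScard]; exact pow_card_eq_one'
    have h2 : ((s : Multiplicative G)) ^ (2 ^ k) = 1 := by
      have := congrArg (Subtype.val) h1
      push_cast at this
      simpa using this
    have h3 := congrArg Multiplicative.toAdd h2
    rw [toAdd_pow, toAdd_one] at h3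
    exact h3
  have hinj : Function.Injective
      (fun s : S => (⟨Multiplicative.toAdd ((s : Multiplicative G)),
        himage s⟩ : {x : G // 2 ^ k • x = 0})) := by
    intro s t hst
    have : (s : Multiplicative G) = (t : Multiplicative G) := by
      simpa using congrArg Subtype.val hst
    exact Subtype.ext this
  have hge : 2 ^ k ≤ #(univ.filter fun x : G => 2 ^ k • x = 0) := by
    have := Nat.card_le_card_of_injective _ hinj
    rw [show Nat.card ↥S = Nat.card ↥(↑S : Subgroup (Multiplicative G)) from rfl, hScard] at this
    rwa [Nat.card_eq_fintype_card, Fintype.card_subtype] at this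
  have hnotsub : ¬ ((univ.filter fun x : G => 2 ^ k • x = 0)
      ⊆ (univ.filter fun x : G => 2 ^ (k-1) • x = 0)) := by
    intro hsub
    have h3 := card_le_card hsub
    have h4 := hle (k - 1)
    have h5 : 2 ^ (k - 1) < 2 ^ k := Nat.pow_lt_pow_right one_lt_two (by omega)
    omega
  obtain ⟨x, hx, hx'⟩ := not_subset.mp hnotsub
  simp only [mem_filter, mem_univ, true_and] at hx hx'
  have hdvd : addOrderOf x ∣ 2 ^ k := addOrderOf_dvd_of_nsmul_eq_zero hx
  obtain ⟨j, hj, horder⟩ := (Nat.dvd_prime_pow Nat.prime_two).mp hdvd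
  refine ⟨x, ?_⟩
  rcases eq_or_lt_of_le hj with rfl | hjk
  · exact horder
  · exfalso
    apply hx'
    apply addOrderOf_dvd_iff_nsmul_eq_zero.mp
    rw [horder]
    exact pow_dvd_pow 2 (by omega)

/-! ### Auxiliary facts about the curve -/

private def pointEquiv {F : Type*} [Field F] {W : WeierstrassCurve.Affine F} :
    W.Point ≃ Option {P : F × F // W.Nonsingular P.1 P.2} where
  toFun P := match P with
    | .zero => none
    | @WeierstrassCurve.Affine.Point.some _ _ _ x y h => Option.some ⟨(x, y), h⟩
  invFun o := match o with
    | none => .zero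
    | Option.some ⟨(x, y), h⟩ => .some _ _ h
  left_inv P := by cases P <;> rfl
  right_inv o := by rcases o with _ | ⟨⟨x, y⟩, h⟩ <;> rfl

private lemma two_ne_zero'' (p : ℕ) [Fact p.Prime] (hp4 : p % 4 = 3) : (2 : ZMod p) ≠ 0 := by
  intro h
  have h2' : ((2 : ℕ) : ZMod p) = 0 := by exact_mod_cast h
  have := (ZMod.natCast_eq_zero_iff 2 p).mp h2'
  have := Nat.le_of_dvd (by norm_num) this
  omega

private lemma Emx_Δ_ne_zero (p : ℕ) [Fact p.Prime] (hp4 : p % 4 = 3) (m : ℤ)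
    (hm0 : (m : ZMod p) ≠ 0) : (Emx p m).Δ ≠ 0 := by
  have hΔ' : (Emx p m).Δ = 64 * (m : ZMod p) ^ 3 := by
    simp only [WeierstrassCurve.Δ, WeierstrassCurve.b₂, WeierstrassCurve.b₄,
      WeierstrassCurve.b₆, WeierstrassCurve.b₈, Emx]
    ring
  rw [hΔ']
  have h64 : (64 : ZMod p) ≠ 0 := by
    have h26 : (64 : ZMod p) = 2 ^ 6 := by norm_num
    rw [h26]; exact pow_ne_zero _ (two_ne_zero'' p hp4)
  exact mul_ne_zero h64 (pow_ne_zero _ hm0)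

open Finset in
private lemma sum_quadChar (p : ℕ) [Fact p.Prime] (hp4 : p % 4 = 3) (c : ZMod p) :
    ∑ x : ZMod p, quadraticChar (ZMod p) (x ^ 3 - c * x) = 0 := by
  have hp2 : (2 : ZMod p) ≠ 0 := two_ne_zero'' p hp4
  refine sum_involution (fun a _ => -a) ?_ ?_ (fun a _ => mem_univ _) (fun a _ => neg_neg a)
  · intro a _
    have h1 : (-a) ^ 3 - c * (-a) = (-1) * (a ^ 3 - c * a) := by ring
    have hχ : quadraticChar (ZMod p) (-1 : ZMod p) = -1 :=
      quadraticChar_neg_one_iff_not_isSquare.mpr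
        (by rw [ZMod.exists_sq_eq_neg_one_iff]; omega)
    rw [h1, map_mul, hχ]
    ring
  · intro a _ hfa heq
    apply hfa
    have ha0 : a = 0 := by
      have h0 : (2 : ZMod p) * a = 0 := by linear_combination -heq
      rcases mul_eq_zero.mp h0 with h | h
      · exact absurd h hp2
      · exact h
    rw [ha0]
    simp

open Finset in
private lemma card_Emx_points (p : ℕ) [Fact p.Prime] (hp4 : p % 4 = 3) (m : ℤ)
    (hm0 : (m : ZMod p) ≠ 0) :
    Nat.card (Emx p m).Point = p + 1 := by
  classical
  have hchar : ringChar (ZMod p) ≠ 2 := by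
    rw [ZMod.ringChar_zmod_n]; omega
  have hΔ : (Emx p m).Δ ≠ 0 := Emx_Δ_ne_zero p hp4 m hm0
  have hNS : ∀ P : ZMod p × ZMod p,
      (Emx p m).Nonsingular P.1 P.2 ↔ P.2 ^ 2 = P.1 ^ 3 - (m : ZMod p) * P.1 := by
    rintro ⟨x, y⟩
    constructor
    · intro h
      have h1 := ((Emx p m).toAffine.equation_iff x y).mp h.1
      simp only [Emx] at h1
      linear_combination h1
    · intro h
      refine (WeierstrassCurve.Affine.equation_iff_nonsingular_of_Δ_ne_zero (W := Emx p m) hΔ).mp ?_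
      rw [(Emx p m).toAffine.equation_iff x y]
      simp only [Emx]
      linear_combination h
  have e1 : {P : ZMod p × ZMod p // (Emx p m).Nonsingular P.1 P.2}
      ≃ Σ x : ZMod p, {y : ZMod p // y ^ 2 = x ^ 3 - (m : ZMod p) * x} :=
    (Equiv.subtypeEquivRight hNS).trans (Equiv.subtypeProdEquivSigmaSubtype
      (fun x y : ZMod p => y ^ 2 = x ^ 3 - (m : ZMod p) * x))
  have key : ∀ x : ZMod p, (Fintype.card {y : ZMod p // y ^ 2 = x ^ 3 - (m : ZMod p) * x} : ℤ)
      = quadraticChar (ZMod p) (x ^ 3 - (m : ZMod p) * x) + 1 := by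
    intro x
    rw [← quadraticChar_card_sqrts hchar (x ^ 3 - (m : ZMod p) * x)]
    norm_cast
    rw [Set.toFinset_card]
    exact Fintype.card_congr (Equiv.subtypeEquivRight fun y => Iff.rfl)
  have hsum : ((∑ x : ZMod p,
      Fintype.card {y : ZMod p // y ^ 2 = x ^ 3 - (m : ZMod p) * x}) : ℤ) = p := by
    rw [Finset.sum_congr rfl fun x _ => key x, Finset.sum_add_distrib,
      sum_quadChar p hp4 (m : ZMod p)]
    simp [ZMod.card]
  have hcard : Nat.card {P : ZMod p × ZMod p // (Emx p m).Nonsingular P.1 P.2} = p := by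
    rw [Nat.card_congr e1, Nat.card_eq_fintype_card, Fintype.card_sigma]
    exact_mod_cast hsum
  rw [Nat.card_congr (pointEquiv (W := Emx p m)), Nat.card_eq_fintype_card,
    Fintype.card_option, ← Nat.card_eq_fintype_card, hcard]

/-- If `p = 2^k·n − 1` is prime with `k ≥ 2`, `n` odd, and `m` a quadratic
non-residue mod `p`, then `E : y² = x³ − m·x` over `F_p` has a point of order
exactly `2^k`. -/
theorem stmt_9 (k n p : ℕ) (hk : 2 ≤ k) (hn : Odd n) (hp : p = 2 ^ k * n - 1)
    [Fact p.Prime] (m : ℤ) (hm0 : (m : ZMod p) ≠ 0) (hm : ¬ IsSquare (m : ZMod p)) :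
    ∃ Q : (Emx p m).Point, addOrderOf Q = 2 ^ k := by
  classical
  have hn0 : n ≠ 0 := by rintro rfl; simp at hn
  have hpow : 2 ^ k = 4 * 2 ^ (k - 2) := by
    rw [show (4 : ℕ) = 2 ^ 2 from rfl, ← pow_add]
    congr 1
    omega
  have hppos : 0 < 2 ^ (k - 2) * n := by positivity
  have hp1 : p + 1 = 2 ^ k * n := by
    rw [hp, hpow]
    have : 4 * 2 ^ (k - 2) * n = 4 * (2 ^ (k - 2) * n) := by ring
    omega
  have hp4 : p % 4 = 3 := by
    have h1 : p + 1 = 4 * (2 ^ (k - 2) * n) := by rw [hp1, hpow]; ring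
    omega
  have h2 : (2 : ZMod p) ≠ 0 := two_ne_zero'' p hp4
  have hΔ : (Emx p m).Δ ≠ 0 := Emx_Δ_ne_zero p hp4 m hm0
  letI : Fintype (Emx p m).Point := Fintype.ofEquiv _ (pointEquiv (W := Emx p m)).symm
  letI : DecidableEq (Emx p m).Point := Classical.decEq _
  have hcardG : Fintype.card (Emx p m).Point = 2 ^ k * n := by
    rw [← Nat.card_eq_fintype_card, card_Emx_points p hp4 m hm0, hp1]
  -- the point `(0, 0)` on the curve
  have h₀ : (Emx p m).Nonsingular 0 0 := by
    refine (WeierstrassCurve.Affine.equation_iff_nonsingular_of_Δ_ne_zero (W := Emx p m) hΔ).mp ?_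
    rw [(Emx p m).toAffine.equation_iff 0 0]
    simp [Emx]
  -- classification of the 2-torsion
  have h2tor : ∀ P : (Emx p m).Point, 2 • P = 0 →
      P = 0 ∨ P = WeierstrassCurve.Affine.Point.some _ _ h₀ := by
    intro P hP
    rw [two_nsmul] at hP
    cases P with
    | zero => exact Or.inl rfl
    | @some x y h =>
      right
      by_cases hy : y = (Emx p m).toAffine.negY x y
      · have hy' : y = -y := by
          simpa [WeierstrassCurve.Affine.negY, Emx] using hy
        have hy0 : y = 0 := by
          have h0 : (2 : ZMod p) * y = 0 := by linear_combination hy'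
          rcases mul_eq_zero.mp h0 with h' | h'
          · exact absurd h' h2
          · exact h'
        have heq := ((Emx p m).toAffine.equation_iff x y).mp h.1
        simp only [Emx] at heq
        have hx0 : x = 0 := by
          by_contra hx
          apply hm
          refine ⟨x, ?_⟩
          apply mul_right_cancel₀ hx
          rw [hy0] at heq
          linear_combination heq
        subst hx0; subst hy0
        rfl
      · rw [WeierstrassCurve.Affine.Point.add_self_of_Y_ne hy] at hP
        exact absurd hP (WeierstrassCurve.Affine.Point.some_ne_zero _)
  have h2fil : (Finset.univ.filter fun P : (Emx p m).Point => 2 • P = 0).card ≤ 2 := by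
    have hsub : (Finset.univ.filter fun P : (Emx p m).Point => 2 • P = 0)
        ⊆ {0, WeierstrassCurve.Affine.Point.some _ _ h₀} := by
      intro P hP
      rcases h2tor P (Finset.mem_filter.mp hP).2 with h' | h' <;> simp [h']
    calc (Finset.univ.filter fun P : (Emx p m).Point => 2 • P = 0).card
        ≤ ({0, WeierstrassCurve.Affine.Point.some _ _ h₀} :
            Finset (Emx p m).Point).card := Finset.card_le_card hsub
      _ ≤ 2 := (Finset.card_insert_le _ _).trans (by simp)
  exact exists_addOrderOf_eq_two_pow (by omega) hn hcardG
    (filter_two_pow_smul_le h2fil)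
end
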